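/- Let γ denote the standard Gaussian measure N(0,1) on ℝ, let φ : ℝ → ℝ be of class C¹ with bounded derivative, and for t ∈ (0,1) define φ_t(x) = ∫_ℝ φ(√t·y + √(1−t)·x) dγ(y). Then φ_t is three times differentiable, for every x one has φ_t'''(x) = ((1−t)^{3/2}/t) ∫_ℝ (y²−1)·φ'(√t·y + √(1−t)·x) dγ(y), and consequently sup_x |φ_t'''(x)| ≤ √2 · ((1−t)^{3/2}/t) · sup_x|φ'(x)|. -/

import Mathlib

open MeasureTheory ProbabilityTheory Real Filter
open scoped NNReal ENNReal

namespace TDGS3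


lemma pow_le_factorial_mul_exp (n : ℕ) {r : ℝ} (hr : 0 ≤ r) :
    r ^ n ≤ n.factorial * Real.exp r := by
  have h := Real.pow_div_factorial_le_exp r hr n
  have hn : (0:ℝ) < n.factorial := by exact_mod_cast n.factorial_pos
  calc r ^ n = n.factorial * (r ^ n / n.factorial) := by field_simp
    _ ≤ n.factorial * Real.exp r := mul_le_mul_of_nonneg_left h hn.le

lemma integrable_abs_pow_mul_exp (n : ℕ) {b : ℝ} (hb : 0 < b) :
    Integrable (fun x : ℝ => |x| ^ n * Real.exp (-b * x ^ 2)) := by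
  have hb2 : 0 < b / 2 := by linarith
  set K : ℝ := n.factorial * (2 / b) ^ n with hK
  have hK0 : 0 ≤ K := by positivity
  refine Integrable.mono' ((integrable_exp_neg_mul_sq hb).add
      ((integrable_exp_neg_mul_sq hb2).const_mul K)) ?_ (Eventually.of_forall fun x => ?_)
  · exact ((continuous_abs.pow n).mul (by continuity)).aestronglyMeasurable
  · have hE : (0:ℝ) ≤ Real.exp (-b * x ^ 2) := (Real.exp_pos _).le
    have hx : |x| ^ n ≤ 1 + K * Real.exp (b / 2 * x ^ 2) := by
      rcases le_total |x| 1 with h | h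
      · have h1 : |x| ^ n ≤ 1 := pow_le_one₀ (abs_nonneg x) h
        have h2 : (0:ℝ) ≤ K * Real.exp (b / 2 * x ^ 2) := by positivity
        linarith
      · have h1 : |x| ^ n ≤ |x| ^ (2 * n) := pow_le_pow_right₀ h (by omega)
        have h2 : |x| ^ (2 * n) = (x ^ 2) ^ n := by rw [pow_mul, sq_abs]
        have h3 : (x ^ 2) ^ n = (2 / b) ^ n * (b / 2 * x ^ 2) ^ n := by
          rw [← mul_pow]; congr 1; field_simp
        have h4 : (b / 2 * x ^ 2) ^ n ≤ n.factorial * Real.exp (b / 2 * x ^ 2) :=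
          pow_le_factorial_mul_exp n (by positivity)
        have h5 : (0:ℝ) ≤ (2 / b) ^ n := by positivity
        calc |x| ^ n ≤ (x ^ 2) ^ n := by rw [← h2]; exact h1
          _ = (2 / b) ^ n * (b / 2 * x ^ 2) ^ n := h3
          _ ≤ (2 / b) ^ n * (↑n.factorial * Real.exp (b / 2 * x ^ 2)) :=
              mul_le_mul_of_nonneg_left h4 h5
          _ = K * Real.exp (b / 2 * x ^ 2) := by rw [hK]; ring
          _ ≤ 1 + K * Real.exp (b / 2 * x ^ 2) := by linarith
    have hmul : Real.exp (b / 2 * x ^ 2) * Real.exp (-b * x ^ 2)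
        = Real.exp (-(b / 2) * x ^ 2) := by
      rw [← Real.exp_add]; congr 1; ring
    have hfin : |x| ^ n * Real.exp (-b * x ^ 2)
        ≤ Real.exp (-b * x ^ 2) + K * Real.exp (-(b / 2) * x ^ 2) := by
      calc |x| ^ n * Real.exp (-b * x ^ 2)
          ≤ (1 + K * Real.exp (b / 2 * x ^ 2)) * Real.exp (-b * x ^ 2) :=
            mul_le_mul_of_nonneg_right hx hE
        _ = Real.exp (-b * x ^ 2)
            + K * (Real.exp (b / 2 * x ^ 2) * Real.exp (-b * x ^ 2)) := by ring
        _ = _ := by rw [hmul]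
    have hnn : (0:ℝ) ≤ |x| ^ n * Real.exp (-b * x ^ 2) := by positivity
    rw [Real.norm_eq_abs, abs_of_nonneg hnn]
    exact hfin

lemma integrable_weight (n : ℕ) {d : ℝ} (hd : 0 < d) (a : ℝ) :
    Integrable (fun x : ℝ => |x - a| ^ n * Real.exp (-(x - a) ^ 2 / d)) := by
  have h := (integrable_abs_pow_mul_exp n (show (0:ℝ) < 1 / d by positivity)).comp_sub_right a
  refine h.congr (Eventually.of_forall fun x => ?_)
  have : -(1 / d) * (x - a) ^ 2 = -(x - a) ^ 2 / d := by ring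
  simp only [this]

lemma integrable_shifted_weight (k : ℕ) {d : ℝ} (hd : 0 < d) (a : ℝ) :
    Integrable (fun x : ℝ => (|x - a| + 1) ^ k * Real.exp (-(x - a) ^ 2 / d)) := by
  refine Integrable.mono' (((integrable_weight k hd a).const_mul (2 ^ k)).add
      ((integrable_weight 0 hd a).const_mul (2 ^ k))) ?_ (Eventually.of_forall fun x => ?_)
  · apply Continuous.aestronglyMeasurable
    apply Continuous.mul
    · exact ((continuous_abs.comp (by continuity)).add continuous_const).pow k
    · continuity
  · have hE : (0:ℝ) ≤ Real.exp (-(x - a) ^ 2 / d) := (Real.exp_pos _).le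
    have h1 : (|x - a| + 1) ^ k ≤ 2 ^ k * (|x - a| ^ k + 1) := by
      calc (|x - a| + 1) ^ k ≤ 2 ^ (k - 1) * (|x - a| ^ k + 1 ^ k) :=
            add_pow_le (abs_nonneg (x - a)) zero_le_one k
        _ ≤ 2 ^ k * (|x - a| ^ k + 1) := by
            rw [one_pow]
            refine mul_le_mul_of_nonneg_right ?_ (by positivity)
            exact pow_le_pow_right₀ one_le_two (Nat.sub_le k 1)
    rw [Real.norm_eq_abs, abs_of_nonneg (by positivity)]
    calc (|x - a| + 1) ^ k * Real.exp (-(x - a) ^ 2 / d)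
        ≤ (2 ^ k * (|x - a| ^ k + 1)) * Real.exp (-(x - a) ^ 2 / d) :=
          mul_le_mul_of_nonneg_right h1 hE
      _ = 2 ^ k * (|x - a| ^ k * Real.exp (-(x - a) ^ 2 / d))
          + 2 ^ k * (|x - a| ^ 0 * Real.exp (-(x - a) ^ 2 / d)) := by ring

lemma integral_gaussianReal_eq {m : ℝ} {v : ℝ≥0} (hv : v ≠ 0) (f : ℝ → ℝ) :
    ∫ x, f x ∂(gaussianReal m v) = ∫ x, gaussianPDFReal m v x * f x := by
  rw [gaussianReal_of_var_ne_zero _ hv,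
    show gaussianPDF m v = fun x => ((fun x => (gaussianPDFReal m v x).toNNReal) x : ℝ≥0∞)
      from rfl,
    integral_withDensity_eq_integral_smul ((measurable_gaussianPDFReal m v).real_toNNReal) f]
  refine integral_congr_ae (Eventually.of_forall fun x => ?_)
  simp [NNReal.smul_def, Real.coe_toNNReal _ (gaussianPDFReal_nonneg m v x)]

lemma integrable_gaussianReal_iff {m : ℝ} {v : ℝ≥0} (hv : v ≠ 0) (f : ℝ → ℝ) :
    Integrable f (gaussianReal m v) ↔ Integrable (fun x => gaussianPDFReal m v x * f x) := by
  rw [gaussianReal_of_var_ne_zero _ hv,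
    show gaussianPDF m v = fun x => ((fun x => (gaussianPDFReal m v x).toNNReal) x : ℝ≥0∞)
      from rfl,
    integrable_withDensity_iff_integrable_smul ((measurable_gaussianPDFReal m v).real_toNNReal)]
  constructor <;> intro h <;> refine h.congr (Eventually.of_forall fun x => ?_) <;>
    simp [NNReal.smul_def, Real.coe_toNNReal _ (gaussianPDFReal_nonneg m v x)]

lemma gaussianPDFReal_zero_one (x : ℝ) :
    gaussianPDFReal 0 1 x = (Real.sqrt (2 * π))⁻¹ * Real.exp (-x ^ 2 / 2) := by
  rw [gaussianPDFReal]
  norm_num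

lemma integrable_gaussian_poly {f : ℝ → ℝ} (hf : Continuous f) (n : ℕ) {K : ℝ}
    (hK : ∀ y, |f y| ≤ K * (1 + |y| ^ n)) :
    Integrable f (gaussianReal 0 1) := by
  have hK0 : 0 ≤ K := by
    have h0 := (abs_nonneg (f 0)).trans (hK 0)
    nlinarith [pow_nonneg (abs_nonneg (0:ℝ)) n]
  rw [integrable_gaussianReal_iff one_ne_zero]
  have h2 : (0:ℝ) < 2 := by norm_num
  refine Integrable.mono' (((integrable_weight 0 h2 0).const_mul ((Real.sqrt (2*π))⁻¹ * K)).add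
      ((integrable_weight n h2 0).const_mul ((Real.sqrt (2*π))⁻¹ * K))) ?_
      (Eventually.of_forall fun x => ?_)
  · apply Continuous.aestronglyMeasurable
    have hc : Continuous (gaussianPDFReal 0 1) := by
      rw [gaussianPDFReal_def]
      continuity
    exact hc.mul hf
  · simp only [sub_zero, pow_zero, one_mul, gaussianPDFReal_zero_one]
    have hE : (0:ℝ) ≤ Real.exp (-x ^ 2 / 2) := (Real.exp_pos _).le
    have hκ : (0:ℝ) ≤ (Real.sqrt (2*π))⁻¹ := by positivity
    rw [Real.norm_eq_abs, abs_mul, abs_of_nonneg (by positivity : (0:ℝ) ≤ (Real.sqrt (2*π))⁻¹ * Real.exp (-x ^ 2 / 2))]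
    calc ((Real.sqrt (2*π))⁻¹ * Real.exp (-x ^ 2 / 2)) * |f x|
        ≤ ((Real.sqrt (2*π))⁻¹ * Real.exp (-x ^ 2 / 2)) * (K * (1 + |x| ^ n)) :=
          mul_le_mul_of_nonneg_left (hK x) (by positivity)
      _ = (Real.sqrt (2*π))⁻¹ * K * Real.exp (-x ^ 2 / 2)
          + (Real.sqrt (2*π))⁻¹ * K * (|x| ^ n * Real.exp (-x ^ 2 / 2)) := by ring

lemma gaussianReal_map_affine (m : ℝ) (c : ℝ) :
    (gaussianReal 0 1).map (fun y => c * y + m)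
      = gaussianReal m ⟨c ^ 2, sq_nonneg c⟩ := by
  have h1 : (fun y : ℝ => c * y + m) = (fun y : ℝ => y + m) ∘ (fun y : ℝ => c * y) := rfl
  rw [h1, ← Measure.map_map (measurable_id'.add_const m) (measurable_id'.const_mul c),
    show (fun y : ℝ => c * y) = (c * ·) from rfl, gaussianReal_map_const_mul,
    show (fun y : ℝ => y + m) = (· + m) from rfl, gaussianReal_map_add_const]
  simp
  rfl

lemma integral_comp_affine {f : ℝ → ℝ} (hf : Continuous f) (m c : ℝ) :
    ∫ y, f (c * y + m) ∂(gaussianReal 0 1)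
      = ∫ x, f x ∂(gaussianReal m ⟨c ^ 2, sq_nonneg c⟩) := by
  rw [← gaussianReal_map_affine m c, integral_map]
  · exact ((measurable_id'.const_mul c).add_const m).aemeasurable
  · exact hf.aestronglyMeasurable




section Core

variable {t : ℝ} (ht : 0 < t) {g : ℝ → ℝ} (hg : Continuous g) {C : ℝ}
  (hgC : ∀ x, |g x| ≤ C)

include ht in
lemma hasDerivAt_inner_exp (u m : ℝ) :
    HasDerivAt (fun m => Real.exp (-(u - m) ^ 2 / (2 * t)))
      ((u - m) / t * Real.exp (-(u - m) ^ 2 / (2 * t))) m := by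
  have h0 : HasDerivAt (fun m : ℝ => u - m) (-1) m := by
    simpa using (hasDerivAt_id m).const_sub u
  have h1 : HasDerivAt (fun m : ℝ => -(u - m) ^ 2 / (2 * t)) ((u - m) / t) m := by
    have h2 := ((h0.pow 2).neg).div_const (2 * t)
    refine h2.congr_deriv ?_
    have htne : t ≠ 0 := ht.ne'
    field_simp
    ring
  have h3 := h1.exp
  convert h3 using 1
  ring

include ht in
lemma hasDerivAt_inner_exp2 (u m : ℝ) :
    HasDerivAt (fun m => (u - m) / t * Real.exp (-(u - m) ^ 2 / (2 * t)))
      ((((u - m) / t) ^ 2 - 1 / t) * Real.exp (-(u - m) ^ 2 / (2 * t))) m := by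
  have ha : HasDerivAt (fun m : ℝ => (u - m) / t) (-1 / t) m := by
    have := (by simpa using (hasDerivAt_id m).const_sub u :
      HasDerivAt (fun m : ℝ => u - m) (-1) m).div_const t
    simpa using this
  have := ha.mul (hasDerivAt_inner_exp ht u m)
  refine this.congr_deriv ?_
  ring

include ht hg hgC in
lemma hasDerivAt_G1 (m₀ : ℝ) :
    HasDerivAt (fun m => ∫ u, g u * Real.exp (-(u - m) ^ 2 / (2 * t)))
      (∫ u, g u * ((u - m₀) / t * Real.exp (-(u - m₀) ^ 2 / (2 * t)))) m₀ := by
  have hC : 0 ≤ C := (abs_nonneg _).trans (hgC 0)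
  have h2t : 0 < 2 * t := by linarith
  have h4t : 0 < 4 * t := by linarith
  have key : ∀ m ∈ Metric.ball m₀ (1:ℝ), ∀ u : ℝ,
      Real.exp (-(u - m) ^ 2 / (2 * t))
        ≤ Real.exp (1 / (2 * t)) * Real.exp (-(u - m₀) ^ 2 / (4 * t)) := by
    intro m hm u
    rw [← Real.exp_add]
    apply Real.exp_le_exp.2
    have hmm : |m - m₀| ≤ 1 := le_of_lt (by simpa [Real.dist_eq] using hm)
    have h1 : (m - m₀) ^ 2 ≤ 1 := by nlinarith [abs_nonneg (m - m₀), sq_abs (m - m₀)]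
    have h2 : (u - m₀) ^ 2 ≤ 2 * (u - m) ^ 2 + 2 * (m - m₀) ^ 2 := by
      nlinarith [sq_nonneg ((u - m) - (m - m₀))]
    have e1 : -(u - m) ^ 2 / (2 * t) = (-2 * (u - m) ^ 2) / (4 * t) := by ring
    have e2 : 1 / (2 * t) + -(u - m₀) ^ 2 / (4 * t) = (2 - (u - m₀) ^ 2) / (4 * t) := by ring
    rw [e1, e2]
    gcongr
    linarith
  have hmain := hasDerivAt_integral_of_dominated_loc_of_deriv_le (μ := volume)
      (F := fun m u => g u * Real.exp (-(u - m) ^ 2 / (2 * t)))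
      (F' := fun m u => g u * ((u - m) / t * Real.exp (-(u - m) ^ 2 / (2 * t))))
      (x₀ := m₀) (s := Metric.ball m₀ 1)
      (bound := fun u => C * Real.exp (1 / (2 * t)) / t
        * ((|u - m₀| + 1) * Real.exp (-(u - m₀) ^ 2 / (4 * t))))
      (Metric.ball_mem_nhds m₀ one_pos)
      (Eventually.of_forall fun m => by
        exact (hg.mul (by continuity)).aestronglyMeasurable)
      (by
        refine Integrable.mono' ((integrable_weight 0 h2t m₀).const_mul C)
          ((hg.mul (by continuity)).aestronglyMeasurable)
          (Eventually.of_forall fun u => ?_)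
        simp only [pow_zero, one_mul, Real.norm_eq_abs, abs_mul, Real.abs_exp]
        exact mul_le_mul_of_nonneg_right (hgC u) (Real.exp_pos _).le)
      ((hg.mul (by continuity)).aestronglyMeasurable)
      (Eventually.of_forall fun u => by
        intro m hm
        have hmm : |m - m₀| ≤ 1 := le_of_lt (by simpa [Real.dist_eq] using hm)
        have habs : |u - m| ≤ |u - m₀| + 1 := by
          calc |u - m| = |(u - m₀) - (m - m₀)| := by congr 1; ring
            _ ≤ |u - m₀| + |m - m₀| := abs_sub _ _
            _ ≤ |u - m₀| + 1 := by linarith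
        have hE := key m hm u
        rw [Real.norm_eq_abs, abs_mul, abs_mul, abs_div, Real.abs_exp, abs_of_pos ht]
        calc |g u| * (|u - m| / t * Real.exp (-(u - m) ^ 2 / (2 * t)))
            ≤ C * ((|u - m₀| + 1) / t
              * (Real.exp (1 / (2 * t)) * Real.exp (-(u - m₀) ^ 2 / (4 * t)))) := by
              gcongr
              exact hgC u
          _ = C * Real.exp (1 / (2 * t)) / t
              * ((|u - m₀| + 1) * Real.exp (-(u - m₀) ^ 2 / (4 * t))) := by ring)
      (by
        have h1 := integrable_weight 1 h4t m₀
        have h0 := integrable_weight 0 h4t m₀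
        refine ((h1.add h0).const_mul (C * Real.exp (1 / (2 * t)) / t)).congr
          (Eventually.of_forall fun u => ?_)
        simp only [Pi.add_apply]
        ring)
      (Eventually.of_forall fun u => by
        intro m hm
        exact (hasDerivAt_inner_exp ht u m).const_mul (g u))
  exact hmain.2

include ht hg hgC in
lemma hasDerivAt_G2 (m₀ : ℝ) :
    HasDerivAt (fun m => ∫ u, g u * ((u - m) / t * Real.exp (-(u - m) ^ 2 / (2 * t))))
      (∫ u, g u * ((((u - m₀) / t) ^ 2 - 1 / t)
        * Real.exp (-(u - m₀) ^ 2 / (2 * t)))) m₀ := by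
  have hC : 0 ≤ C := (abs_nonneg _).trans (hgC 0)
  have h2t : 0 < 2 * t := by linarith
  have h4t : 0 < 4 * t := by linarith
  have key : ∀ m ∈ Metric.ball m₀ (1:ℝ), ∀ u : ℝ,
      Real.exp (-(u - m) ^ 2 / (2 * t))
        ≤ Real.exp (1 / (2 * t)) * Real.exp (-(u - m₀) ^ 2 / (4 * t)) := by
    intro m hm u
    rw [← Real.exp_add]
    apply Real.exp_le_exp.2
    have hmm : |m - m₀| ≤ 1 := le_of_lt (by simpa [Real.dist_eq] using hm)
    have h1 : (m - m₀) ^ 2 ≤ 1 := by nlinarith [abs_nonneg (m - m₀), sq_abs (m - m₀)]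
    have h2 : (u - m₀) ^ 2 ≤ 2 * (u - m) ^ 2 + 2 * (m - m₀) ^ 2 := by
      nlinarith [sq_nonneg ((u - m) - (m - m₀))]
    have e1 : -(u - m) ^ 2 / (2 * t) = (-2 * (u - m) ^ 2) / (4 * t) := by ring
    have e2 : 1 / (2 * t) + -(u - m₀) ^ 2 / (4 * t) = (2 - (u - m₀) ^ 2) / (4 * t) := by ring
    rw [e1, e2]
    gcongr
    linarith
  have hmain := hasDerivAt_integral_of_dominated_loc_of_deriv_le (μ := volume)
      (F := fun m u => g u * ((u - m) / t * Real.exp (-(u - m) ^ 2 / (2 * t))))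
      (F' := fun m u => g u * ((((u - m) / t) ^ 2 - 1 / t)
        * Real.exp (-(u - m) ^ 2 / (2 * t))))
      (x₀ := m₀) (s := Metric.ball m₀ 1)
      (bound := fun u => C * Real.exp (1 / (2 * t)) / t ^ 2
        * (((|u - m₀| + 1) ^ 2 + t) * Real.exp (-(u - m₀) ^ 2 / (4 * t))))
      (Metric.ball_mem_nhds m₀ one_pos)
      (Eventually.of_forall fun m => by
        exact (hg.mul (by continuity)).aestronglyMeasurable)
      (by
        refine Integrable.mono' ((integrable_weight 1 h2t m₀).const_mul (C / t))
          ((hg.mul (by continuity)).aestronglyMeasurable)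
          (Eventually.of_forall fun u => ?_)
        simp only [pow_one, Real.norm_eq_abs, abs_mul, abs_div, Real.abs_exp, abs_of_pos ht]
        calc |g u| * (|u - m₀| / t * Real.exp (-(u - m₀) ^ 2 / (2 * t)))
            ≤ C * (|u - m₀| / t * Real.exp (-(u - m₀) ^ 2 / (2 * t))) := by
              gcongr
              exact hgC u
          _ = C / t * (|u - m₀| * Real.exp (-(u - m₀) ^ 2 / (2 * t))) := by ring)
      ((hg.mul (by continuity)).aestronglyMeasurable)
      (Eventually.of_forall fun u => by
        intro m hm
        have hmm : |m - m₀| ≤ 1 := le_of_lt (by simpa [Real.dist_eq] using hm)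
        have habs : |u - m| ≤ |u - m₀| + 1 := by
          calc |u - m| = |(u - m₀) - (m - m₀)| := by congr 1; ring
            _ ≤ |u - m₀| + |m - m₀| := abs_sub _ _
            _ ≤ |u - m₀| + 1 := by linarith
        have hE := key m hm u
        have hsq : (u - m) ^ 2 ≤ (|u - m₀| + 1) ^ 2 := by
          nlinarith [sq_abs (u - m), abs_nonneg (u - m), abs_nonneg (u - m₀)]
        have hq : |((u - m) / t) ^ 2 - 1 / t| ≤ ((|u - m₀| + 1) ^ 2 + t) / t ^ 2 := by
          have h5 : |((u - m) / t) ^ 2 - 1 / t| ≤ ((u - m) / t) ^ 2 + 1 / t := by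
            refine (abs_sub _ _).trans ?_
            rw [abs_of_nonneg (sq_nonneg _), abs_of_nonneg (by positivity : (0:ℝ) ≤ 1 / t)]
          have h6 : ((u - m) / t) ^ 2 + 1 / t = ((u - m) ^ 2 + t) / t ^ 2 := by
            have htne : t ≠ 0 := ht.ne'
            field_simp
          rw [h6] at h5
          refine h5.trans ?_
          gcongr
        rw [Real.norm_eq_abs, abs_mul]
        calc |g u| * |(((u - m) / t) ^ 2 - 1 / t) * Real.exp (-(u - m) ^ 2 / (2 * t))|
            = |g u| * (|((u - m) / t) ^ 2 - 1 / t| * Real.exp (-(u - m) ^ 2 / (2 * t))) := by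
              rw [abs_mul, Real.abs_exp]
          _ ≤ C * ((((|u - m₀| + 1) ^ 2 + t) / t ^ 2)
              * (Real.exp (1 / (2 * t)) * Real.exp (-(u - m₀) ^ 2 / (4 * t)))) := by
              have hnum : (0:ℝ) ≤ ((|u - m₀| + 1) ^ 2 + t) / t ^ 2 :=
                div_nonneg (by nlinarith [sq_nonneg (|u - m₀| + 1)]) (sq_nonneg t)
              gcongr
              exact hgC u
          _ = C * Real.exp (1 / (2 * t)) / t ^ 2
              * (((|u - m₀| + 1) ^ 2 + t) * Real.exp (-(u - m₀) ^ 2 / (4 * t))) := by ring)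
      (by
        have h1 := integrable_shifted_weight 2 h4t m₀
        have h0 := integrable_weight 0 h4t m₀
        refine ((h1.add (h0.const_mul t)).const_mul
          (C * Real.exp (1 / (2 * t)) / t ^ 2)).congr
          (Eventually.of_forall fun u => ?_)
        simp only [Pi.add_apply]
        ring)
      (Eventually.of_forall fun u => by
        intro m hm
        exact (hasDerivAt_inner_exp2 ht u m).const_mul (g u))
  exact hmain.2

end Core



lemma integrable_abs_pow_exp_gauss (n : ℕ) :
    Integrable (fun x : ℝ => |x| ^ n * Real.exp (-x ^ 2 / 2)) := by
  have h := integrable_weight n (show (0:ℝ) < 2 by norm_num) 0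
  simpa only [sub_zero] using h

lemma integrable_pow_exp_gauss (n : ℕ) :
    Integrable (fun x : ℝ => x ^ n * Real.exp (-x ^ 2 / 2)) := by
  refine (integrable_abs_pow_exp_gauss n).mono' ?_ (Eventually.of_forall fun x => ?_)
  · exact ((continuous_pow n).mul (by continuity)).aestronglyMeasurable
  · rw [Real.norm_eq_abs, abs_mul, Real.abs_exp, abs_pow]

lemma hasDerivAt_exp_gauss (y : ℝ) :
    HasDerivAt (fun y : ℝ => Real.exp (-y ^ 2 / 2)) (-y * Real.exp (-y ^ 2 / 2)) y := by
  have h0 : HasDerivAt (fun y : ℝ => -y ^ 2 / 2) (-y) y := by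
    have := (hasDerivAt_pow 2 y).neg.div_const 2
    refine this.congr_deriv ?_
    push_cast
    ring
  have := h0.exp
  convert this using 1
  ring

lemma integral_exp_gauss : ∫ y : ℝ, Real.exp (-y ^ 2 / 2) = Real.sqrt (2 * π) := by
  have h := integral_gaussian (1/2)
  rw [show (fun y : ℝ => Real.exp (-y ^ 2 / 2)) = fun y : ℝ => Real.exp (-(1/2) * y ^ 2) by
    funext y; congr 1; ring]
  rw [h]
  congr 1
  ring

lemma integral_sq_exp_gauss : ∫ y : ℝ, y ^ 2 * Real.exp (-y ^ 2 / 2) = Real.sqrt (2 * π) := by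
  have hu : ∀ y : ℝ, HasDerivAt (fun y : ℝ => y) 1 y := fun y => hasDerivAt_id y
  have h := integral_mul_deriv_eq_deriv_mul_of_integrable (fun x _ => hu x) (fun x _ => hasDerivAt_exp_gauss x) ?_ ?_ ?_
  · have e1 : ∫ y : ℝ, y * (-y * Real.exp (-y ^ 2 / 2))
        = -∫ y : ℝ, y ^ 2 * Real.exp (-y ^ 2 / 2) := by
      rw [← integral_neg]
      congr 1; funext y; ring
    have e2 : ∫ y : ℝ, (1:ℝ) * Real.exp (-y ^ 2 / 2) = Real.sqrt (2 * π) := by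
      simp only [one_mul]; exact integral_exp_gauss
    rw [e1, e2] at h
    linarith [h]
  · refine (integrable_pow_exp_gauss 2).mono' ?_ (Eventually.of_forall fun y => ?_)
    · apply Continuous.aestronglyMeasurable
      show Continuous fun y : ℝ => y * (-y * Real.exp (-y ^ 2 / 2))
      continuity
    · show ‖y * (-y * Real.exp (-y ^ 2 / 2))‖ ≤ _
      rw [Real.norm_eq_abs, abs_mul, abs_mul, abs_neg, Real.abs_exp]
      rw [show |y| * (|y| * Real.exp (-y ^ 2 / 2)) = y ^ 2 * Real.exp (-y ^ 2 / 2) by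
        rw [← sq_abs]; ring]
  · refine (integrable_pow_exp_gauss 0).mono' ?_ (Eventually.of_forall fun y => ?_)
    · apply Continuous.aestronglyMeasurable
      show Continuous fun y : ℝ => (1:ℝ) * Real.exp (-y ^ 2 / 2)
      continuity
    · show ‖(1:ℝ) * Real.exp (-y ^ 2 / 2)‖ ≤ _
      simp [Real.abs_exp, abs_of_nonneg (Real.exp_pos _).le]
  · refine (integrable_abs_pow_exp_gauss 1).mono' ?_ (Eventually.of_forall fun y => ?_)
    · apply Continuous.aestronglyMeasurable
      show Continuous fun y : ℝ => y * Real.exp (-y ^ 2 / 2)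
      continuity
    · show ‖y * Real.exp (-y ^ 2 / 2)‖ ≤ _
      rw [Real.norm_eq_abs, abs_mul, Real.abs_exp, pow_one]

lemma integral_pow4_exp_gauss :
    ∫ y : ℝ, y ^ 4 * Real.exp (-y ^ 2 / 2) = 3 * Real.sqrt (2 * π) := by
  have hu : ∀ y : ℝ, HasDerivAt (fun y : ℝ => y ^ 3) ((3:ℝ) * y ^ 2) y := fun y => by
    simpa using hasDerivAt_pow 3 y
  have h := integral_mul_deriv_eq_deriv_mul_of_integrable (fun x _ => hu x) (fun x _ => hasDerivAt_exp_gauss x) ?_ ?_ ?_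
  · have e1 : ∫ y : ℝ, y ^ 3 * (-y * Real.exp (-y ^ 2 / 2))
        = -∫ y : ℝ, y ^ 4 * Real.exp (-y ^ 2 / 2) := by
      rw [← integral_neg]
      congr 1; funext y; ring
    have e2 : ∫ y : ℝ, (3:ℝ) * y ^ 2 * Real.exp (-y ^ 2 / 2)
        = 3 * Real.sqrt (2 * π) := by
      rw [show (fun y : ℝ => (3:ℝ) * y ^ 2 * Real.exp (-y ^ 2 / 2))
          = fun y : ℝ => (3:ℝ) * (y ^ 2 * Real.exp (-y ^ 2 / 2)) by funext y; ring,
        integral_const_mul, integral_sq_exp_gauss]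
    rw [e1, e2] at h
    linarith [h]
  · refine (integrable_abs_pow_exp_gauss 4).mono' ?_ (Eventually.of_forall fun y => ?_)
    · apply Continuous.aestronglyMeasurable
      show Continuous fun y : ℝ => y ^ 3 * (-y * Real.exp (-y ^ 2 / 2))
      continuity
    · show ‖y ^ 3 * (-y * Real.exp (-y ^ 2 / 2))‖ ≤ _
      rw [Real.norm_eq_abs, abs_mul, abs_mul, abs_neg, Real.abs_exp, abs_pow]
      rw [show |y| ^ 3 * (|y| * Real.exp (-y ^ 2 / 2)) = |y| ^ 4 * Real.exp (-y ^ 2 / 2) by ring]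
  · refine ((integrable_abs_pow_exp_gauss 2).const_mul 3).mono'
      ?_ (Eventually.of_forall fun y => ?_)
    · apply Continuous.aestronglyMeasurable
      show Continuous fun y : ℝ => (3:ℝ) * y ^ 2 * Real.exp (-y ^ 2 / 2)
      continuity
    · show ‖(3:ℝ) * y ^ 2 * Real.exp (-y ^ 2 / 2)‖ ≤ _
      rw [Real.norm_eq_abs, abs_mul, abs_mul, Real.abs_exp, abs_pow]
      rw [show |(3:ℝ)| = 3 by norm_num]
      rw [show (3:ℝ) * |y| ^ 2 * Real.exp (-y ^ 2 / 2)
          = 3 * (|y| ^ 2 * Real.exp (-y ^ 2 / 2)) by ring]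
  · refine (integrable_abs_pow_exp_gauss 3).mono' ?_ (Eventually.of_forall fun y => ?_)
    · apply Continuous.aestronglyMeasurable
      show Continuous fun y : ℝ => y ^ 3 * Real.exp (-y ^ 2 / 2)
      continuity
    · show ‖y ^ 3 * Real.exp (-y ^ 2 / 2)‖ ≤ _
      rw [Real.norm_eq_abs, abs_mul, Real.abs_exp, abs_pow]


lemma integral_sq_gaussian : ∫ y, y ^ 2 ∂(gaussianReal 0 1) = 1 := by
  rw [integral_gaussianReal_eq one_ne_zero]
  have h1 : (fun x : ℝ => gaussianPDFReal 0 1 x * x ^ 2)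
      = fun x => (Real.sqrt (2*π))⁻¹ * (x ^ 2 * Real.exp (-x ^ 2 / 2)) := by
    funext x; rw [gaussianPDFReal_zero_one]; ring
  rw [h1, integral_const_mul, integral_sq_exp_gauss, inv_mul_cancel₀]
  exact (Real.sqrt_pos.2 (by positivity)).ne'

lemma integral_pow4_gaussian : ∫ y, y ^ 4 ∂(gaussianReal 0 1) = 3 := by
  rw [integral_gaussianReal_eq one_ne_zero]
  have h1 : (fun x : ℝ => gaussianPDFReal 0 1 x * x ^ 4)
      = fun x => (Real.sqrt (2*π))⁻¹ * (x ^ 4 * Real.exp (-x ^ 2 / 2)) := by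
    funext x; rw [gaussianPDFReal_zero_one]; ring
  have hne : Real.sqrt (2*π) ≠ 0 := (Real.sqrt_pos.2 (by positivity)).ne'
  rw [h1, integral_const_mul, integral_pow4_exp_gauss]
  field_simp

lemma integrable_sq_gaussian : Integrable (fun y : ℝ => y ^ 2) (gaussianReal 0 1) := by
  refine integrable_gaussian_poly (by continuity) 2 (K := 1) fun y => ?_
  rw [one_mul, abs_pow, sq_abs]
  nlinarith [sq_nonneg y]

lemma integrable_pow4_gaussian : Integrable (fun y : ℝ => y ^ 4) (gaussianReal 0 1) := by
  refine integrable_gaussian_poly (by continuity) 4 (K := 1) fun y => ?_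
  rw [one_mul, abs_pow]
  have : |y| ^ 4 = y ^ 4 := by rw [← abs_pow]; exact abs_of_nonneg (by positivity)
  nlinarith [this, pow_nonneg (abs_nonneg y) 4]

lemma integral_sq_sub_one_sq : ∫ y, (y ^ 2 - 1) ^ 2 ∂(gaussianReal 0 1) = 2 := by
  have i4 := integrable_pow4_gaussian
  have i2 := integrable_sq_gaussian
  have h1 : (fun y : ℝ => (y ^ 2 - 1) ^ 2) = fun y => y ^ 4 - 2 * y ^ 2 + 1 := by
    funext y; ring
  rw [h1]
  calc ∫ y, y ^ 4 - 2 * y ^ 2 + 1 ∂(gaussianReal 0 1)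
      = (∫ y, y ^ 4 - 2 * y ^ 2 ∂(gaussianReal 0 1)) + ∫ _, (1:ℝ) ∂(gaussianReal 0 1) :=
        integral_add (i4.sub (i2.const_mul 2)) (integrable_const 1)
    _ = ((∫ y, y ^ 4 ∂(gaussianReal 0 1)) - ∫ y, 2 * y ^ 2 ∂(gaussianReal 0 1)) + 1 := by
        rw [integral_sub i4 (i2.const_mul 2)]
        simp
    _ = 2 := by
        rw [integral_const_mul, integral_sq_gaussian, integral_pow4_gaussian]
        norm_num

lemma gauss_abs_sq_sub_one_le : ∫ y, |y ^ 2 - 1| ∂(gaussianReal 0 1) ≤ Real.sqrt 2 := by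
  have hX : MemLp (fun y : ℝ => |y ^ 2 - 1|) 2 (gaussianReal 0 1) := by
    refine (memLp_two_iff_integrable_sq ?_).2 ?_
    · exact (Continuous.abs (by continuity)).aestronglyMeasurable
    · have h1 : (fun y : ℝ => |y ^ 2 - 1| ^ 2) = fun y => (y ^ 2 - 1) ^ 2 := by
        funext y; rw [sq_abs]
      rw [h1]
      refine integrable_gaussian_poly (by continuity) 4 (K := 3) fun y => ?_
      have h2 : |y| ^ 4 = y ^ 4 := by rw [← abs_pow]; exact abs_of_nonneg (by positivity)
      rw [abs_of_nonneg (sq_nonneg (y ^ 2 - 1)), h2]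
      nlinarith [sq_nonneg y, sq_nonneg (y ^ 2 - 1), sq_nonneg (y ^ 2 + 1)]
  have hvar := variance_nonneg (fun y : ℝ => |y ^ 2 - 1|) (gaussianReal 0 1)
  rw [variance_eq_sub hX] at hvar
  have hXsq : ∫ y, ((fun y : ℝ => |y ^ 2 - 1|) ^ 2) y ∂(gaussianReal 0 1) = 2 := by
    have h1 : ((fun y : ℝ => |y ^ 2 - 1|) ^ 2) = fun y : ℝ => (y ^ 2 - 1) ^ 2 := by
      funext y; simp [sq_abs]
    rw [h1, integral_sq_sub_one_sq]
  rw [hXsq] at hvar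
  have h0 : 0 ≤ ∫ y, |y ^ 2 - 1| ∂(gaussianReal 0 1) :=
    integral_nonneg fun y => abs_nonneg _
  exact (Real.le_sqrt h0 (by norm_num)).2 (by linarith)


end TDGS3

open TDGS3

set_option maxHeartbeats 1000000 in
theorem third_deriv_gaussian_smoothing
    (φ : ℝ → ℝ) (hφ : ContDiff ℝ 1 φ) (hφ' : ∃ C : ℝ, ∀ x, |deriv φ x| ≤ C)
    (t : ℝ) (ht : t ∈ Set.Ioo (0 : ℝ) 1)
    (φt : ℝ → ℝ)
    (hφt : φt = fun x => ∫ y, φ (Real.sqrt t * y + Real.sqrt (1 - t) * x)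
      ∂(gaussianReal 0 1)) :
    (∀ x, DifferentiableAt ℝ φt x) ∧ (∀ x, DifferentiableAt ℝ (deriv φt) x) ∧
    (∀ x, DifferentiableAt ℝ (deriv (deriv φt)) x) ∧
    (∀ x, deriv (deriv (deriv φt)) x
        = ((1 - t) ^ ((3 : ℝ) / 2) / t) *
            ∫ y, (y ^ 2 - 1) * deriv φ (Real.sqrt t * y + Real.sqrt (1 - t) * x)
              ∂(gaussianReal 0 1)) ∧
    (∀ x, |deriv (deriv (deriv φt)) x|
        ≤ Real.sqrt 2 * ((1 - t) ^ ((3 : ℝ) / 2) / t) * ⨆ y, |deriv φ y|) := by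
  obtain ⟨ht0, ht1⟩ := ht
  obtain ⟨C, hgC⟩ := hφ'
  have hC : 0 ≤ C := (abs_nonneg _).trans (hgC 0)
  have hg : Continuous (deriv φ) := hφ.continuous_deriv le_rfl
  have hφd : Differentiable ℝ φ := hφ.differentiable one_ne_zero
  have h1t : 0 < 1 - t := by linarith
  set c := Real.sqrt t with hc
  set s := Real.sqrt (1 - t) with hs
  have hc0 : 0 < c := Real.sqrt_pos.2 ht0
  have hs0 : 0 < s := Real.sqrt_pos.2 h1t
  have hc2 : c ^ 2 = t := Real.sq_sqrt ht0.le
  set γ := gaussianReal 0 1 with hγ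
  set vt : ℝ≥0 := ⟨t, ht0.le⟩ with hvt
  have hvtR : (vt : ℝ) = t := rfl
  have hvt0 : vt ≠ 0 := by
    intro h
    apply ht0.ne'
    rw [← hvtR, h]
    rfl
  have veq : (⟨c ^ 2, sq_nonneg c⟩ : ℝ≥0) = vt := by
    apply Subtype.ext
    exact hc2
  set κ := (Real.sqrt (2 * Real.pi * t))⁻¹ with hκ
  have pdf_eq : ∀ m u : ℝ, gaussianPDFReal m vt u
      = κ * Real.exp (-(u - m) ^ 2 / (2 * t)) := fun m u => rfl
  have bridge : ∀ (f : ℝ → ℝ), Continuous f → ∀ x : ℝ,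
      (∫ y, f (c * y + s * x) ∂γ)
        = ∫ u, (κ * Real.exp (-(u - s * x) ^ 2 / (2 * t))) * f u := by
    intro f hf x
    rw [hγ, integral_comp_affine hf (s * x) c, veq, integral_gaussianReal_eq hvt0 f]
    simp only [pdf_eq]
  set G : ℝ → ℝ := fun m => ∫ u, deriv φ u * Real.exp (-(u - m) ^ 2 / (2 * t)) with hG
  set G1 : ℝ → ℝ := fun m =>
    ∫ u, deriv φ u * ((u - m) / t * Real.exp (-(u - m) ^ 2 / (2 * t))) with hG1
  set G2 : ℝ → ℝ := fun m =>
    ∫ u, deriv φ u * ((((u - m) / t) ^ 2 - 1 / t)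
      * Real.exp (-(u - m) ^ 2 / (2 * t))) with hG2
  have hDG : ∀ m, HasDerivAt G (G1 m) m := fun m => hasDerivAt_G1 ht0 hg hgC m
  have hDG1 : ∀ m, HasDerivAt G1 (G2 m) m := fun m => hasDerivAt_G2 ht0 hg hgC m
  have hlin : ∀ x : ℝ, HasDerivAt (fun x : ℝ => s * x) s x := fun x => by
    simpa using (hasDerivAt_id x).const_mul s
  have step1 : ∀ x₀ : ℝ, HasDerivAt φt (∫ y, deriv φ (c * y + s * x₀) * s ∂γ) x₀ := by
    intro x₀
    rw [hφt]
    refine (hasDerivAt_integral_of_dominated_loc_of_deriv_le (μ := γ)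
      (F := fun x y => φ (c * y + s * x))
      (F' := fun x y => deriv φ (c * y + s * x) * s)
      (x₀ := x₀) (s := Metric.ball x₀ 1) (bound := fun _ => C * s) (Metric.ball_mem_nhds x₀ one_pos)
      (Eventually.of_forall fun x =>
        (hφ.continuous.comp (by continuity)).aestronglyMeasurable)
      ?_ (((hg.comp (by continuity)).mul continuous_const).aestronglyMeasurable)
      (Eventually.of_forall fun y => ?_) (integrable_const _)
      (Eventually.of_forall fun y => ?_)).2
    · have hlip : ∀ z : ℝ, |φ z| ≤ |φ 0| + C * |z| := by
        intro z
        have hl : LipschitzWith C.toNNReal φ := by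
          refine lipschitzWith_of_nnnorm_deriv_le hφd fun x => ?_
          rw [← NNReal.coe_le_coe, coe_nnnorm, Real.norm_eq_abs, Real.coe_toNNReal C hC]
          exact hgC x
        have h2 := hl.dist_le_mul z 0
        rw [Real.dist_eq, Real.dist_eq, sub_zero, Real.coe_toNNReal C hC] at h2
        calc |φ z| = |(φ z - φ 0) + φ 0| := by congr 1; ring
          _ ≤ |φ z - φ 0| + |φ 0| := abs_add_le _ _
          _ ≤ C * |z| + |φ 0| := by linarith
          _ = |φ 0| + C * |z| := by ring
      rw [hγ]
      refine integrable_gaussian_poly (hφ.continuous.comp (by continuity)) 1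
        (K := |φ 0| + C * s * |x₀| + C * c) (fun y => ?_)
      have h3 : |c * y + s * x₀| ≤ c * |y| + s * |x₀| := by
        calc |c * y + s * x₀| ≤ |c * y| + |s * x₀| := abs_add_le _ _
          _ = c * |y| + s * |x₀| := by
              rw [abs_mul, abs_mul, abs_of_pos hc0, abs_of_pos hs0]
      have h4 := hlip (c * y + s * x₀)
      simp only [pow_one]
      nlinarith [abs_nonneg y, abs_nonneg x₀, abs_nonneg (φ 0),
        mul_le_mul_of_nonneg_left h3 hC,
        mul_nonneg (abs_nonneg (φ 0)) (abs_nonneg y),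
        mul_nonneg (mul_nonneg (mul_nonneg hC hs0.le) (abs_nonneg x₀)) (abs_nonneg y),
        mul_nonneg (mul_nonneg hC hc0.le) (abs_nonneg y)]
    · intro x hx
      rw [Real.norm_eq_abs, abs_mul, abs_of_pos hs0]
      exact mul_le_mul_of_nonneg_right (hgC _) hs0.le
    · intro x hx
      have hin : HasDerivAt (fun x : ℝ => c * y + s * x) s x := by
        simpa using ((hasDerivAt_id x).const_mul s).const_add (c * y)
      exact ((hφd (c * y + s * x)).hasDerivAt.comp x hin)
  have hψ : ∀ x : ℝ, (∫ y, deriv φ (c * y + s * x) * s ∂γ) = s * (κ * G (s * x)) := by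
    intro x
    rw [integral_mul_const, bridge (deriv φ) hg x]
    have h5 : (∫ u, (κ * Real.exp (-(u - s * x) ^ 2 / (2 * t))) * deriv φ u)
        = κ * G (s * x) := by
      simp only [hG]
      rw [← integral_const_mul]
      congr 1
      funext u
      ring
    rw [h5]
    ring
  have d1 : deriv φt = fun x => s * (κ * G (s * x)) := by
    funext x
    rw [(step1 x).deriv, hψ x]
  have hd2at : ∀ x : ℝ, HasDerivAt (fun x => s * (κ * G (s * x)))
      (s * (κ * (G1 (s * x) * s))) x := fun x =>
    (((hDG (s * x)).comp x (hlin x)).const_mul κ).const_mul s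
  have d2 : deriv (deriv φt) = fun x => s * (κ * (G1 (s * x) * s)) := by
    funext x
    rw [d1, (hd2at x).deriv]
  have hd3at : ∀ x : ℝ, HasDerivAt (fun x => s * (κ * (G1 (s * x) * s)))
      (s * (κ * (G2 (s * x) * s * s))) x := by
    intro x
    exact ((((hDG1 (s * x)).comp x (hlin x)).mul_const s).const_mul κ).const_mul s
  have d3 : deriv (deriv (deriv φt)) = fun x => s * (κ * (G2 (s * x) * s * s)) := by
    funext x
    rw [d2, (hd3at x).deriv]
  have htne : t ≠ 0 := ht0.ne'
  have keyform : ∀ x : ℝ, (∫ y, (y ^ 2 - 1) * deriv φ (c * y + s * x) ∂γ)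
      = t * (κ * G2 (s * x)) := by
    intro x
    have hfc : Continuous fun u : ℝ => (((u - s * x) / c) ^ 2 - 1) * deriv φ u :=
      ((((continuous_id.sub continuous_const).div_const c).pow 2).sub
        continuous_const).mul hg
    have h1 : (∫ y, (y ^ 2 - 1) * deriv φ (c * y + s * x) ∂γ)
        = ∫ y, (fun u => (((u - s * x) / c) ^ 2 - 1) * deriv φ u) (c * y + s * x) ∂γ := by
      congr 1
      funext y
      have he : (c * y + s * x - s * x) / c = y := by field_simp; ring
      simp only [he]
    rw [h1, bridge _ hfc x]
    have h2 : ∀ u : ℝ, (κ * Real.exp (-(u - s * x) ^ 2 / (2 * t)))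
          * ((((u - s * x) / c) ^ 2 - 1) * deriv φ u)
        = t * (κ * (deriv φ u * ((((u - s * x) / t) ^ 2 - 1 / t)
          * Real.exp (-(u - s * x) ^ 2 / (2 * t))))) := by
      intro u
      rw [div_pow, div_pow, hc2]
      field_simp
    calc ∫ u, (κ * Real.exp (-(u - s * x) ^ 2 / (2 * t)))
          * ((((u - s * x) / c) ^ 2 - 1) * deriv φ u)
        = ∫ u, t * (κ * (deriv φ u * ((((u - s * x) / t) ^ 2 - 1 / t)
            * Real.exp (-(u - s * x) ^ 2 / (2 * t))))) := by
          congr 1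
          funext u
          exact h2 u
      _ = t * (κ * G2 (s * x)) := by
          simp only [hG2]
          rw [integral_const_mul, integral_const_mul]
  have hs3 : s ^ 3 = (1 - t) ^ ((3 : ℝ) / 2) := by
    rw [hs, Real.sqrt_eq_rpow,
      ← Real.rpow_natCast ((1 - t) ^ ((1:ℝ) / 2)) 3,
      ← Real.rpow_mul h1t.le]
    norm_num
  have part4 : ∀ x : ℝ, deriv (deriv (deriv φt)) x
      = ((1 - t) ^ ((3 : ℝ) / 2) / t)
        * ∫ y, (y ^ 2 - 1) * deriv φ (c * y + s * x) ∂γ := by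
    intro x
    rw [d3]
    show s * (κ * (G2 (s * x) * s * s)) = _
    rw [keyform x, ← hs3]
    field_simp
  have part5 : ∀ x : ℝ, |deriv (deriv (deriv φt)) x|
      ≤ Real.sqrt 2 * ((1 - t) ^ ((3 : ℝ) / 2) / t) * ⨆ y, |deriv φ y| := by
    intro x
    have hMbdd : BddAbove (Set.range fun y => |deriv φ y|) :=
      ⟨C, by rintro _ ⟨y, rfl⟩; exact hgC y⟩
    have hMy : ∀ y : ℝ, |deriv φ y| ≤ ⨆ y, |deriv φ y| := fun y => le_ciSup hMbdd y
    have hM0 : (0:ℝ) ≤ ⨆ y, |deriv φ y| := (abs_nonneg _).trans (hMy 0)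
    have hcoef : (0:ℝ) ≤ (1 - t) ^ ((3 : ℝ) / 2) / t :=
      div_nonneg (Real.rpow_nonneg h1t.le _) ht0.le
    rw [part4 x, abs_mul, abs_of_nonneg hcoef]
    have iInt : Integrable (fun y => (y ^ 2 - 1) * deriv φ (c * y + s * x)) γ := by
      rw [hγ]
      refine integrable_gaussian_poly
        (((continuous_pow 2).sub continuous_const).mul
          (hg.comp ((continuous_const.mul continuous_id).add continuous_const)))
          2 (K := C) fun y => ?_
      have e1 : |y ^ 2 - 1| ≤ 1 + |y| ^ 2 := by
        refine (abs_sub _ _).trans ?_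
        rw [abs_one, abs_pow]
        linarith
      calc |(y ^ 2 - 1) * deriv φ (c * y + s * x)|
          = |y ^ 2 - 1| * |deriv φ (c * y + s * x)| := abs_mul _ _
        _ ≤ (1 + |y| ^ 2) * C :=
            mul_le_mul e1 (hgC _) (abs_nonneg _) (by positivity)
        _ = C * (1 + |y| ^ 2) := by ring
    have iAbs : Integrable (fun y : ℝ => |y ^ 2 - 1|) γ := by
      rw [hγ]
      refine integrable_gaussian_poly (((continuous_pow 2).sub continuous_const).abs)
        2 (K := 1) fun y => ?_
      rw [abs_abs, one_mul]
      refine (abs_sub _ _).trans ?_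
      rw [abs_one, abs_pow]
      linarith
    have h6 : |∫ y, (y ^ 2 - 1) * deriv φ (c * y + s * x) ∂γ|
        ≤ ∫ y, |y ^ 2 - 1| * (⨆ y, |deriv φ y|) ∂γ := by
      calc |∫ y, (y ^ 2 - 1) * deriv φ (c * y + s * x) ∂γ|
          ≤ ∫ y, |(y ^ 2 - 1) * deriv φ (c * y + s * x)| ∂γ := by
            exact norm_integral_le_integral_norm (μ := γ)
              (fun y => (y ^ 2 - 1) * deriv φ (c * y + s * x))
        _ ≤ ∫ y, |y ^ 2 - 1| * (⨆ y, |deriv φ y|) ∂γ := by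
            refine integral_mono iInt.abs (iAbs.mul_const _) fun y => ?_
            rw [abs_mul]
            exact mul_le_mul_of_nonneg_left (hMy _) (abs_nonneg _)
    have h9 : (∫ y, |y ^ 2 - 1| * (⨆ y, |deriv φ y|) ∂γ)
        ≤ Real.sqrt 2 * ⨆ y, |deriv φ y| := by
      rw [integral_mul_const]
      exact mul_le_mul_of_nonneg_right (by rw [hγ]; exact gauss_abs_sq_sub_one_le) hM0
    calc ((1 - t) ^ ((3 : ℝ) / 2) / t) * |∫ y, (y ^ 2 - 1) * deriv φ (c * y + s * x) ∂γ|
        ≤ ((1 - t) ^ ((3 : ℝ) / 2) / t) * (Real.sqrt 2 * ⨆ y, |deriv φ y|) :=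
          mul_le_mul_of_nonneg_left (h6.trans h9) hcoef
      _ = Real.sqrt 2 * ((1 - t) ^ ((3 : ℝ) / 2) / t) * ⨆ y, |deriv φ y| := by ring
  refine ⟨fun x => (step1 x).differentiableAt, fun x => ?_, fun x => ?_, part4, part5⟩
  · rw [d1]
    exact (hd2at x).differentiableAt
  · rw [d2]
    exact (hd3at x).differentiableAt
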